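/- There exists a bi-additive map κ : L × L → kˣ such that κ(λ,λ) = 1 for all λ ∈ L and κ(λ,μ)² = ε(λ,μ) for all λ, μ ∈ L. (Consequently κ also satisfies κ(λ,μ)·κ(μ,λ) = 1.) -/
import Mathlib

open Module Finset

private lemma exists_unit_sq' {k : Type*} [Field k] [IsAlgClosed k] (u : kˣ) :
    ∃ v : kˣ, v ^ 2 = u := by
  obtain ⟨z, hz⟩ := IsAlgClosed.exists_pow_nat_eq (u : k) (n := 2) (by norm_num)
  have hz0 : z ≠ 0 := by
    intro h
    rw [h] at hz
    simp at hz
    exact u.ne_zero hz.symm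
  exact ⟨Units.mk0 z hz0, Units.ext (by simpa using hz)⟩

/-- An alternating square root `κ` of a symmetric bi-additive `{±1}`-valued form `ε`
with trivial diagonal on a finitely generated free abelian group exists. -/
theorem exists_alternating_square_root
    {k : Type*} [Field k] [IsAlgClosed k]
    {L : Type*} [AddCommGroup L] [Module.Free ℤ L] [Module.Finite ℤ L]
    (ε : L → L → kˣ)
    (hadd1 : ∀ a b c : L, ε (a + b) c = ε a c * ε b c)
    (hadd2 : ∀ a b c : L, ε a (b + c) = ε a b * ε a c)
    (hsymm : ∀ a b : L, ε a b = ε b a)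
    (hval : ∀ a b : L, ε a b = 1 ∨ ε a b = -1)
    (hdiag : ∀ a : L, ε a a = 1) :
    ∃ κ : L → L → kˣ,
      (∀ a b c : L, κ (a + b) c = κ a c * κ b c) ∧
      (∀ a b c : L, κ a (b + c) = κ a b * κ a c) ∧
      (∀ a : L, κ a a = 1) ∧
      (∀ a b : L, κ a b ^ 2 = ε a b) ∧
      (∀ a b : L, κ a b * κ b a = 1) := by
  classical
  set ι := Module.Free.ChooseBasisIndex ℤ L with hι
  set bb : Basis ι ℤ L := Module.Free.chooseBasis ℤ L with hbb
  -- ε as a bi-additive hom into `Additive kˣ`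
  let E : L →+ L →+ Additive kˣ :=
    AddMonoidHom.mk' (fun a => AddMonoidHom.mk'
        (fun c => Additive.ofMul (ε a c))
        (fun x y => congrArg Additive.ofMul (hadd2 a x y)))
      (fun x y => AddMonoidHom.ext fun c => congrArg Additive.ofMul (hadd1 x y c))
  have hE : ∀ a c : L,
      ε a c = ∏ i, ∏ j, ε (bb i) (bb j) ^ ((bb.repr a i) * (bb.repr c j)) := by
    intro a c
    have key : Additive.ofMul (ε a c)
        = ∑ i : ι, ∑ j : ι, ((bb.repr a i) * (bb.repr c j)) • Additive.ofMul (ε (bb i) (bb j)) := by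
      have h1 : Additive.ofMul (ε a c) = E a c := rfl
      rw [h1]
      conv_lhs => rw [← bb.sum_repr a, ← bb.sum_repr c]
      rw [map_sum E (fun i => bb.repr a i • bb i) Finset.univ, AddMonoidHom.finset_sum_apply]
      refine Finset.sum_congr rfl fun i _ => ?_
      rw [map_zsmul E]
      rw [show ((bb.repr a) i • E (bb i)) (∑ j : ι, (bb.repr c) j • bb j)
          = (bb.repr a) i • (E (bb i)) (∑ j : ι, (bb.repr c) j • bb j) from rfl]
      rw [map_sum]
      rw [Finset.smul_sum (r := (bb.repr a) i)
        (f := fun j => (E (bb i)) ((bb.repr c) j • bb j)) (s := Finset.univ)]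
      refine Finset.sum_congr rfl fun j _ => ?_
      rw [map_zsmul, smul_smul]
      rfl
    have h2 := congrArg Additive.toMul key
    simpa [toMul_sum, toMul_zsmul] using h2
  -- square roots on the basis
  choose s hs using fun i j : ι => exists_unit_sq' (ε (bb i) (bb j))
  let e : ι ≃ Fin (Fintype.card ι) := Fintype.equivFin ι
  let f : ι → ι → kˣ := fun i j =>
    if e i < e j then s i j else if e j < e i then (s j i)⁻¹ else 1
  have hsq1 : ∀ a c : L, (ε a c) ^ 2 = 1 := by
    intro a c
    rcases hval a c with h | h <;> rw [h] <;> simp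
  have hfinv : ∀ i j, f j i = (f i j)⁻¹ := by
    intro i j
    rcases lt_trichotomy (e i) (e j) with h | h | h
    · simp [f, h, not_lt.2 h.le]
    · have hij : i = j := e.injective h
      subst hij
      simp [f]
    · simp [f, h, not_lt.2 h.le]
  have hfdiag : ∀ i, f i i = 1 := by
    intro i
    simp [f]
  have hfsq : ∀ i j, (f i j) ^ 2 = ε (bb i) (bb j) := by
    intro i j
    rcases lt_trichotomy (e i) (e j) with h | h | h
    · simp [f, h, hs]
    · have hij : i = j := e.injective h
      subst hij
      simp [f, hdiag]
    · have h' : ¬ e i < e j := not_lt.2 h.le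
      have h1 : (f i j) ^ 2 = ((s j i) ^ 2)⁻¹ := by simp [f, h, h', inv_pow]
      have hx : ε (bb j) (bb i) * ε (bb j) (bb i) = 1 := by
        rw [← sq]; exact hsq1 _ _
      rw [h1, hs, inv_eq_of_mul_eq_one_right hx, hsymm]
  -- the map κ
  refine ⟨fun a c => ∏ i, ∏ j, f i j ^ ((bb.repr a i) * (bb.repr c j)), ?_, ?_, ?_, ?_, ?_⟩
  · intro a b c
    simp only [map_add, Finsupp.add_apply, add_mul, zpow_add, Finset.prod_mul_distrib]
  · intro a b c
    simp only [map_add, Finsupp.add_apply, mul_add, zpow_add, Finset.prod_mul_distrib]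
  · intro a
    show (∏ i, ∏ j, f i j ^ ((bb.repr a i) * (bb.repr a j))) = 1
    rw [← Finset.prod_product' (f := fun i j => f i j ^ ((bb.repr a i) * (bb.repr a j)))]
    refine Finset.prod_involution (fun p _ => (p.2, p.1)) ?_ ?_ (fun p hp => Finset.mem_product.2
      ⟨Finset.mem_univ _, Finset.mem_univ _⟩) (fun p hp => rfl)
    · intro p _
      rw [hfinv p.1 p.2, inv_zpow, mul_comm ((bb.repr a) p.2)]
      exact mul_inv_cancel _
    · intro p _ h hc
      apply h
      have h2 : p.2 = p.1 := congrArg Prod.fst hc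
      rw [h2, hfdiag, one_zpow]
  · intro a c
    rw [hE a c]
    rw [← Finset.prod_pow]
    refine Finset.prod_congr rfl fun i _ => ?_
    rw [← Finset.prod_pow]
    refine Finset.prod_congr rfl fun j _ => ?_
    calc (f i j ^ ((bb.repr a) i * (bb.repr c) j)) ^ 2
        = (f i j ^ (2 : ℕ)) ^ ((bb.repr a) i * (bb.repr c) j) := by
          rw [← zpow_natCast (f i j ^ ((bb.repr a) i * (bb.repr c) j)) 2, ← zpow_mul,
            mul_comm, zpow_mul, zpow_natCast]
      _ = ε (bb i) (bb j) ^ ((bb.repr a) i * (bb.repr c) j) := by rw [hfsq]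
  · intro a c
    have hswap : (∏ i, ∏ j, f i j ^ ((bb.repr c i) * (bb.repr a j)))
        = (∏ i, ∏ j, f i j ^ ((bb.repr a i) * (bb.repr c j)))⁻¹ := by
      rw [Finset.prod_comm]
      rw [← Finset.prod_inv_distrib]
      refine Finset.prod_congr rfl fun i _ => ?_
      rw [← Finset.prod_inv_distrib]
      refine Finset.prod_congr rfl fun j _ => ?_
      rw [hfinv i j, inv_zpow, mul_comm ((bb.repr c) j)]
    show (∏ i, ∏ j, f i j ^ ((bb.repr a i) * (bb.repr c j))) *
        (∏ i, ∏ j, f i j ^ ((bb.repr c i) * (bb.repr a j))) = 1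
    rw [hswap]
    exact mul_inv_cancel _
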